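/- Let H be a finite-dimensional vector space over a field K of characteristic zero with a symmetric bilinear form B, and let 𝓗 and Ω be as in the context. Let a = ∑_{n∈ℤ} a_n zⁿ be a formal Laurent series with coefficients a_n ∈ End(H) and support bounded below, and assume each a_n admits a B-adjoint a_n^* (meaning B(a_n x, y) = B(x, a_n^* y) for all x, y ∈ H) satisfying a_n^* = (−1)^{n+1} a_n, i.e. a^*(−z) + a(z) = 0 (a belongs to the twisted loop Lie algebra). Then the multiplication operator f ↦ a·f on 𝓗, defined by (a·f)_n = ∑_{k+l=n} a_k(f_l), is Ω-anti-symmetric: Ω(a·f, g) + Ω(f, a·g) = 0 for all f, g ∈ 𝓗. In particular, multiplication by z⁻¹ (the case a = z⁻¹·id, defining the string flow) is Ω-anti-symmetric. -/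

import Mathlib

/-- Givental's symplectic form `Ω(f,g) = ∑_{i+j=−1} (−1)^i B(f_i, g_j)` on the
loop space of Hahn series over `ℤ` with coefficients in `H`. -/
noncomputable def giventalForm {K H : Type*} [Field K] [AddCommGroup H] [Module K H]
    (B : LinearMap.BilinForm K H) (f g : HahnSeries ℤ H) : K :=
  ∑ᶠ i : ℤ, (-1 : K) ^ i * B (f.coeff i) (g.coeff (-1 - i))

set_option linter.unusedVariables false

private lemma exists_lb' {V : Type*} [Zero V] (w : HahnSeries ℤ V) :
    ∃ m : ℤ, ∀ n : ℤ, w.coeff n ≠ 0 → m ≤ n := by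
  rcases w.support.eq_empty_or_nonempty with h | h
  · refine ⟨0, fun n hn => absurd ((w.mem_support n).2 hn) (by simp [h])⟩
  · exact ⟨w.isWF_support.min h, fun n hn => w.isWF_support.min_le h ((w.mem_support n).2 hn)⟩

private lemma main_aux {K H : Type*} [Field K] [AddCommGroup H] [Module K H]
    (B : LinearMap.BilinForm K H)
    (a : HahnSeries ℤ (Module.End K H)) (astar : ℤ → Module.End K H)
    (hadj : ∀ (n : ℤ) (x y : H), B (a.coeff n x) y = B x (astar n y))
    (hstar : ∀ n : ℤ, astar n = ((-1 : K) ^ (n + 1)) • a.coeff n)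
    (f g F G : HahnSeries ℤ H)
    (hF : ∀ n : ℤ, F.coeff n = ∑ᶠ k : ℤ, a.coeff k (f.coeff (n - k)))
    (hG : ∀ n : ℤ, G.coeff n = ∑ᶠ k : ℤ, a.coeff k (g.coeff (n - k))) :
    giventalForm B F g + giventalForm B f G = 0 := by
  obtain ⟨mf, hmf⟩ := exists_lb' f
  obtain ⟨mg, hmg⟩ := exists_lb' g
  obtain ⟨ma, hma⟩ := exists_lb' a
  obtain ⟨mF0, hmF0⟩ := exists_lb' F
  obtain ⟨mG0, hmG0⟩ := exists_lb' G
  -- zero lemmas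
  have hfz : ∀ n : ℤ, n < mf → f.coeff n = 0 := fun n h => by
    by_contra hc; exact absurd (hmf n hc) (by omega)
  have hgz : ∀ n : ℤ, n < mg → g.coeff n = 0 := fun n h => by
    by_contra hc; exact absurd (hmg n hc) (by omega)
  have haz : ∀ n : ℤ, n < ma → a.coeff n = 0 := fun n h => by
    by_contra hc; exact absurd (hma n hc) (by omega)
  have hFz : ∀ n : ℤ, n < mF0 → F.coeff n = 0 := fun n h => by
    by_contra hc; exact absurd (hmF0 n hc) (by omega)
  have hGz : ∀ n : ℤ, n < mG0 → G.coeff n = 0 := fun n h => by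
    by_contra hc; exact absurd (hmG0 n hc) (by omega)
  set mF : ℤ := min mF0 (mf + ma) with hmF
  set mG : ℤ := min mG0 (mg + ma) with hmG'
  set I : Finset ℤ := Finset.Icc mF (-1 - mg) with hI
  set J : Finset ℤ := Finset.Icc mf (-1 - mG) with hJ
  set Kf : Finset ℤ := Finset.Icc ma (-1 - mf - mg) with hKf
  -- step 1
  have h1 : giventalForm B F g
      = ∑ i ∈ I, ∑ k ∈ Kf, (-1:K)^i * B (a.coeff k (f.coeff (i - k))) (g.coeff (-1 - i)) := by
    rw [giventalForm, finsum_eq_sum_of_support_subset _ (s := I) ?_]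
    · refine Finset.sum_congr rfl fun i hi => ?_
      rw [hF i, finsum_eq_sum_of_support_subset _ (s := Kf) ?_,
        LinearMap.BilinForm.sum_left, Finset.mul_sum]
      · intro k hk
        rw [Function.mem_support] at hk
        simp only [hKf, Finset.coe_Icc, Set.mem_Icc]
        constructor
        · by_contra h
          exact hk (by rw [haz k (by omega)]; simp)
        · by_contra h
          rw [Finset.mem_Icc] at hi
          exact hk (by rw [hfz (i - k) (by omega)]; simp)
    · intro i hi
      rw [Function.mem_support] at hi
      simp only [hI, Finset.coe_Icc, Set.mem_Icc]
      constructor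
      · by_contra h
        exact hi (by rw [hFz i (by omega)]; simp)
      · by_contra h
        exact hi (by rw [hgz (-1 - i) (by omega)]; simp)
  -- step 2
  have h2 : giventalForm B f G
      = ∑ j ∈ J, ∑ k ∈ Kf, (-1:K)^j * B (f.coeff j) (a.coeff k (g.coeff (-1 - j - k))) := by
    rw [giventalForm, finsum_eq_sum_of_support_subset _ (s := J) ?_]
    · refine Finset.sum_congr rfl fun j hj => ?_
      rw [hG (-1 - j), finsum_eq_sum_of_support_subset _ (s := Kf) ?_,
        LinearMap.BilinForm.sum_right, Finset.mul_sum]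
      · intro k hk
        rw [Function.mem_support] at hk
        simp only [hKf, Finset.coe_Icc, Set.mem_Icc]
        constructor
        · by_contra h
          exact hk (by rw [haz k (by omega)]; simp)
        · by_contra h
          rw [Finset.mem_Icc] at hj
          exact hk (by rw [hgz (-1 - j - k) (by omega)]; simp)
    · intro j hj
      rw [Function.mem_support] at hj
      simp only [hJ, Finset.coe_Icc, Set.mem_Icc]
      constructor
      · by_contra h
        exact hj (by rw [hfz j (by omega)]; simp)
      · by_contra h
        exact hj (by rw [hGz (-1 - j) (by omega)]; simp)
  -- pointwise identity
  have key : ∀ i k : ℤ,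
      (-1:K)^i * B (a.coeff k (f.coeff (i - k))) (g.coeff (-1 - i))
      = -((-1:K)^(i - k) * B (f.coeff (i - k)) (a.coeff k (g.coeff (-1 - (i - k) - k)))) := by
    intro i k
    have he : (-1 : ℤ) - (i - k) - k = -1 - i := by ring
    rw [he, hadj, hstar]
    simp only [LinearMap.smul_apply, map_smul, smul_eq_mul]
    have hsc : (-1:K)^i * (-1:K)^(k+1) = -(-1:K)^(i - k) := by
      have hne : (-1:K) ≠ 0 := by norm_num
      have hik : (i : ℤ) = (i - k) + k := by ring
      have hsq : ((-1:K))^k * ((-1:K))^k = 1 := by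
        rw [← mul_zpow, neg_mul_neg, one_mul, one_zpow]
      have hk0 : ((-1:K))^k ≠ 0 := zpow_ne_zero _ hne
      rw [zpow_sub₀ hne, zpow_add₀ hne, zpow_one, ← neg_div, eq_div_iff hk0]
      linear_combination (-(-1:K)^i) * hsq
    calc (-1:K)^i * ((-1:K)^(k+1) * B (f.coeff (i-k)) (a.coeff k (g.coeff (-1 - i))))
        = ((-1:K)^i * (-1:K)^(k+1)) * B (f.coeff (i-k)) (a.coeff k (g.coeff (-1 - i))) := by ring
      _ = -((-1:K)^(i - k) * B (f.coeff (i-k)) (a.coeff k (g.coeff (-1 - i)))) := by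
          rw [hsc]; ring
  -- reindexing
  have hw : ∀ k, k ∈ Kf → (∑ i ∈ I, (-1:K)^(i - k) * B (f.coeff (i - k)) (a.coeff k (g.coeff (-1 - (i - k) - k))))
      = ∑ j ∈ J, (-1:K)^j * B (f.coeff j) (a.coeff k (g.coeff (-1 - j - k))) := by
    intro k hk
    rw [Finset.mem_Icc] at hk
    set w : ℤ → K := fun j => (-1:K)^j * B (f.coeff j) (a.coeff k (g.coeff (-1 - j - k))) with hwdef
    have hsupp : ∀ j : ℤ, w j ≠ 0 → mf ≤ j ∧ -1 - j - k ≥ mg := by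
      intro j hj
      constructor
      · by_contra h
        exact hj (by rw [hwdef]; simp only; rw [hfz j (by omega)]; simp)
      · by_contra h
        exact hj (by rw [hwdef]; simp only; rw [hgz (-1 - j - k) (by omega)]; simp)
    have e1 : (∑ i ∈ I, w (i - k)) = ∑ᶠ i : ℤ, w (i - k) := by
      refine (finsum_eq_sum_of_support_subset _ ?_).symm
      intro i hi
      rw [Function.mem_support] at hi
      obtain ⟨hj1, hj2⟩ := hsupp _ hi
      simp only [hI, Finset.coe_Icc, Set.mem_Icc]
      omega
    have e2 : (∑ᶠ i : ℤ, w (i - k)) = ∑ᶠ j : ℤ, w j :=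
      finsum_comp_equiv (Equiv.subRight k)
    have e3 : (∑ᶠ j : ℤ, w j) = ∑ j ∈ J, w j := by
      refine finsum_eq_sum_of_support_subset _ ?_
      intro j hj
      rw [Function.mem_support] at hj
      obtain ⟨hj1, hj2⟩ := hsupp _ hj
      simp only [hJ, Finset.coe_Icc, Set.mem_Icc]
      omega
    exact e1.trans (e2.trans e3)
  rw [h1, h2]
  have : (∑ i ∈ I, ∑ k ∈ Kf, (-1:K)^i * B (a.coeff k (f.coeff (i - k))) (g.coeff (-1 - i)))
      = -∑ j ∈ J, ∑ k ∈ Kf, (-1:K)^j * B (f.coeff j) (a.coeff k (g.coeff (-1 - j - k))) := by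
    calc (∑ i ∈ I, ∑ k ∈ Kf, (-1:K)^i * B (a.coeff k (f.coeff (i - k))) (g.coeff (-1 - i)))
        = ∑ i ∈ I, ∑ k ∈ Kf, -((-1:K)^(i - k) * B (f.coeff (i - k)) (a.coeff k (g.coeff (-1 - (i - k) - k)))) := by
          exact Finset.sum_congr rfl fun i _ => Finset.sum_congr rfl fun k _ => key i k
      _ = -∑ k ∈ Kf, ∑ i ∈ I, ((-1:K)^(i - k) * B (f.coeff (i - k)) (a.coeff k (g.coeff (-1 - (i - k) - k)))) := by
          rw [Finset.sum_comm]
          simp [Finset.sum_neg_distrib]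
      _ = -∑ k ∈ Kf, ∑ j ∈ J, (-1:K)^j * B (f.coeff j) (a.coeff k (g.coeff (-1 - j - k))) := by
          rw [Finset.sum_congr rfl hw]
      _ = -∑ j ∈ J, ∑ k ∈ Kf, (-1:K)^j * B (f.coeff j) (a.coeff k (g.coeff (-1 - j - k))) := by
          rw [Finset.sum_comm]
  rw [this]
  ring

/-- If `a(z) = ∑ a_n zⁿ` is an `End(H)`-valued Laurent series with
support bounded below such that each `a_n` has a `B`-adjoint `a_n^*` with
`a_n^* = (−1)^{n+1} a_n` (i.e. `a^*(−z) + a(z) = 0`, membership in the twisted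
loop Lie algebra), then the multiplication operator `f ↦ a·f`, given
coefficientwise by `(a·f)_n = ∑_{k+l=n} a_k(f_l)`, is `Ω`-anti-symmetric.
In particular multiplication by `z⁻¹` (the case `a = z⁻¹·id`, whose product
shifts coefficients by `(a·f)_n = f_{n+1}`) is `Ω`-anti-symmetric. -/
theorem twisted_loop_algebra_antisymmetric
    {K H : Type*} [Field K] [CharZero K] [AddCommGroup H] [Module K H]
    [FiniteDimensional K H]
    (B : LinearMap.BilinForm K H) (hBsymm : ∀ x y : H, B x y = B y x) :
    (∀ (a : HahnSeries ℤ (Module.End K H)) (astar : ℤ → Module.End K H),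
      (∀ (n : ℤ) (x y : H), B (a.coeff n x) y = B x (astar n y)) →
      (∀ n : ℤ, astar n = ((-1 : K) ^ (n + 1)) • a.coeff n) →
      ∀ f g F G : HahnSeries ℤ H,
        (∀ n : ℤ, F.coeff n = ∑ᶠ k : ℤ, a.coeff k (f.coeff (n - k))) →
        (∀ n : ℤ, G.coeff n = ∑ᶠ k : ℤ, a.coeff k (g.coeff (n - k))) →
        giventalForm B F g + giventalForm B f G = 0) ∧
    (∀ f g F G : HahnSeries ℤ H,
      (∀ n : ℤ, F.coeff n = f.coeff (n + 1)) →
      (∀ n : ℤ, G.coeff n = g.coeff (n + 1)) →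
      giventalForm B F g + giventalForm B f G = 0) := by
  constructor
  · exact fun a astar h1 h2 => main_aux B a astar h1 h2
  · intro f g F G hF hG
    set a : HahnSeries ℤ (Module.End K H) := HahnSeries.single (-1) 1 with ha
    have hsingle : ∀ (h : HahnSeries ℤ H) (n : ℤ),
        (∑ᶠ k : ℤ, a.coeff k (h.coeff (n - k))) = h.coeff (n + 1) := by
      intro h n
      have e : (∑ᶠ k : ℤ, a.coeff k (h.coeff (n - k))) = a.coeff (-1) (h.coeff (n - (-1))) :=
        finsum_eq_single _ (-1)
          (fun k hk => by simp [ha, HahnSeries.coeff_single_of_ne hk])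
      rw [e]
      simp [ha, HahnSeries.coeff_single_same, sub_neg_eq_add]
    refine main_aux B a (fun n => ((-1:K)^(n+1)) • a.coeff n) ?_ (fun n => rfl) f g F G
      (fun n => by rw [hF n, hsingle f n]) (fun n => by rw [hG n, hsingle g n])
    intro n x y
    by_cases h : n = (-1 : ℤ)
    · subst h
      norm_num [ha, HahnSeries.coeff_single_same]
    · simp [ha, HahnSeries.coeff_single_of_ne h]
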